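/- With Γ₁, Γ₂, Δ, M, 𝓔 as above, the map q : (𝓔 ⊗ M)_Δ → I_ΔM induced by (g, c−1) ⊗ m ↦ c^{-1}·m − m is surjective, and its kernel is isomorphic to the group homology H_1(Γ₁, M) (with Γ₁ acting on M via π); that is, there is an exact sequence of abelian groups 0 → H_1(Γ₁, M) → (𝓔 ⊗ M)_Δ → I_ΔM → 0, functorial in M. -/

import Mathlib

/-!
STATEMENT 9.  The exact sequence 0 → H_1(Γ₁, M) → (𝓔 ⊗ M)_Δ → I_ΔM → 0:
the map q : (𝓔⊗M)_Δ → M induced by (g, c−1) ⊗ m ↦ c⁻¹·m − m has range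
exactly I_ΔM, and its kernel is the isomorphic image of the group homology
H_1(Γ₁, M) (Γ₁ acting on M through π) under an injective homomorphism.
-/

open scoped TensorProduct

section EModule

variable {Γ₁ Δ : Type} [Group Γ₁] [Group Δ]

/-- The augmentation map `ℤ[Δ] → ℤ` (sum of coefficients), with `ℤ[Δ]`
realized as `Δ →₀ ℤ`. -/
noncomputable def augmentation (Δ : Type) : (Δ →₀ ℤ) →+ ℤ :=
  Finsupp.liftAddHom fun _ => AddMonoidHom.id ℤ

/-- The augmentation ideal `I_Δ ⊆ ℤ[Δ]`, as an additive subgroup. -/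
noncomputable def augIdeal (Δ : Type) : AddSubgroup (Δ →₀ ℤ) := (augmentation Δ).ker

/-- The element `c − 1` of `I_Δ`. -/
noncomputable def aidElt [Group Δ] (c : Δ) : ↥(augIdeal Δ) :=
  ⟨Finsupp.single c 1 - Finsupp.single 1 1, by
    simp [augIdeal, AddMonoidHom.mem_ker, map_sub, augmentation,
      Finsupp.liftAddHom_apply_single]⟩

/-- The element `a − b` of `I_Δ`. -/
noncomputable def aidElt2 [Group Δ] (a b : Δ) : ↥(augIdeal Δ) :=
  ⟨Finsupp.single a 1 - Finsupp.single b 1, by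
    simp [augIdeal, AddMonoidHom.mem_ker, map_sub, augmentation,
      Finsupp.liftAddHom_apply_single]⟩

/-- The underlying abelian group `Γ₂^{ab} ⊕ I_Δ` of the ℤ[Δ]-module 𝓔
(with `Γ₂ = ker π` and `Γ₂^{ab}` its abelianization, written additively). -/
abbrev EMod (π : Γ₁ →* Δ) : Type :=
  Additive (Abelianization ↥π.ker) × ↥(augIdeal Δ)

/-- The Δ-action `d·[k] = [σ(d) k σ(d)⁻¹]` on `Γ₂^{ab}` (conjugation uses
normality of `Γ₂ = ker π`). -/
noncomputable def conjAb (π : Γ₁ →* Δ) (σ : Δ → Γ₁) (d : Δ) :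
    Abelianization ↥π.ker →* Abelianization ↥π.ker :=
  Abelianization.map (MulAut.conjNormal (σ d)).toMonoidHom

/-- The 2-cocycle `κ(d,c) = [σ(d)σ(c)σ(dc)⁻¹] ∈ Γ₂^{ab}`. -/
noncomputable def kappaE (π : Γ₁ →* Δ) (σ : Δ → Γ₁) (hσ : ∀ c, π (σ c) = c)
    (d c : Δ) : Abelianization ↥π.ker :=
  Abelianization.of ⟨σ d * σ c * (σ (d * c))⁻¹, by
    have : π (σ d * σ c * (σ (d * c))⁻¹) = 1 := by
      rw [map_mul, map_mul, map_inv, hσ, hσ, hσ, mul_inv_cancel]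
    simpa [MonoidHom.mem_ker] using this⟩

/-- The defining formula of the Δ-action on `𝓔 = Γ₂^{ab} ⊕ I_Δ`:
`d ∗ (g, c−1) = (d·g + κ(d,c), dc − d)`, extended ℤ-linearly.  (The elements
`(g, c−1)` generate `𝓔`, so this determines the action.) -/
def EActionFormula (π : Γ₁ →* Δ) (σ : Δ → Γ₁) (hσ : ∀ c, π (σ c) = c)
    [DistribMulAction Δ (EMod π)] : Prop :=
  ∀ (d : Δ) (g : Abelianization ↥π.ker) (c : Δ),
    d • ((Additive.ofMul g, aidElt c) : EMod π) =
      (Additive.ofMul (conjAb π σ d g * kappaE π σ hσ d c), aidElt2 (d * c) d)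

variable (M : Type) [AddCommGroup M] [DistribMulAction Δ M]

/-- `T = 𝓔 ⊗ M`. -/
abbrev TMod (π : Γ₁ →* Δ) : Type := (EMod π) ⊗[ℤ] M

/-- The diagonal action of `d ∈ Δ` on `𝓔 ⊗ M`. -/
noncomputable def diagT (π : Γ₁ →* Δ) [DistribMulAction Δ (EMod π)] (d : Δ) :
    TMod M π →ₗ[ℤ] TMod M π :=
  TensorProduct.map ((DistribMulAction.toAddMonoidHom (EMod π) d).toIntLinearMap)
    ((DistribMulAction.toAddMonoidHom M d).toIntLinearMap)

/-- The subgroup of `𝓔 ⊗ M` generated by the elements `d•t − t`. -/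
noncomputable def coinvKerT (π : Γ₁ →* Δ) [DistribMulAction Δ (EMod π)] :
    AddSubgroup (TMod M π) :=
  AddSubgroup.closure {x | ∃ (d : Δ) (t : TMod M π), x = diagT M π d t - t}

/-- The Δ-coinvariants `(𝓔 ⊗ M)_Δ`. -/
abbrev CoinvT (π : Γ₁ →* Δ) [DistribMulAction Δ (EMod π)] : Type :=
  TMod M π ⧸ coinvKerT M π

/-- 1-cocycles `Z¹(Γ₁, Hom(M,V))`, where `Γ₁` acts on `Hom(M,V)` by
`(γ·f)(m) = f(π(γ)⁻¹·m)`. -/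
noncomputable def ZOneM (π : Γ₁ →* Δ) (V : Type) [AddCommGroup V] :
    AddSubgroup (Γ₁ → (M →+ V)) where
  carrier := {Φ | ∀ (g h : Γ₁) (m : M), Φ (g * h) m = Φ g m + Φ h ((π g)⁻¹ • m)}
  zero_mem' := by intro g h m; simp
  add_mem' := by
    intro Φ Ψ hΦ hΨ g h m
    simp only [Pi.add_apply, AddMonoidHom.add_apply, hΦ g h m, hΨ g h m]
    abel
  neg_mem' := by
    intro Φ hΦ g h m
    simp only [Pi.neg_apply, AddMonoidHom.neg_apply, hΦ g h m]
    abel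

/-- The subgroup `I_Δ·M ⊆ M` generated by the elements `c•m − m`. -/
noncomputable def idealSMulM : AddSubgroup M :=
  AddSubgroup.closure {x : M | ∃ (c : Δ) (m : M), x = c • m - m}

/-- First differential `(Γ₁ →₀ M) → M`, `[g]⊗m ↦ π(g)•m − m`, of the complex
computing `H_1(Γ₁, M)` (with `Γ₁` acting on `M` through `π`). -/
noncomputable def dOne (π : Γ₁ →* Δ) : (Γ₁ →₀ M) →+ M :=
  Finsupp.liftAddHom fun g =>
    DistribMulAction.toAddMonoidHom M (π g) - AddMonoidHom.id M

/-- Second differential `(Γ₁×Γ₁ →₀ M) → (Γ₁ →₀ M)`,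
`[g|h]⊗m ↦ [h]⊗m − [gh]⊗m + [g]⊗(π(h)•m)`. -/
noncomputable def dTwo (π : Γ₁ →* Δ) : ((Γ₁ × Γ₁) →₀ M) →+ (Γ₁ →₀ M) :=
  Finsupp.liftAddHom fun p =>
    (Finsupp.singleAddHom p.2 - Finsupp.singleAddHom (p.1 * p.2)
      + (Finsupp.singleAddHom p.1).comp (DistribMulAction.toAddMonoidHom M (π p.2)) :
        M →+ (Γ₁ →₀ M))

/-- The group homology `H_1(Γ₁, M)` (action of `Γ₁` on `M` through `π`). -/
abbrev HOne (π : Γ₁ →* Δ) : Type :=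
  ↥(dOne M π).ker ⧸ ((dTwo M π).range.addSubgroupOf (dOne M π).ker)

end EModule

section Aux
variable {Γ₁ Δ : Type} [Group Γ₁] [Group Δ]

lemma aidElt_one : aidElt (1:Δ) = 0 := Subtype.ext (by simp [aidElt])

lemma augmentation_single (c : Δ) (n : ℤ) : augmentation Δ (Finsupp.single c n) = n := by
  simp [augmentation, Finsupp.liftAddHom_apply_single]

lemma aid_gen (u : ↥(augIdeal Δ)) :
    u ∈ AddSubgroup.closure (Set.range (aidElt (Δ := Δ))) := by
  have key : ∀ v : Δ →₀ ℤ, ∀ (hv : v - augmentation Δ v • Finsupp.single 1 1 ∈ augIdeal Δ),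
      (⟨v - augmentation Δ v • Finsupp.single 1 1, hv⟩ : ↥(augIdeal Δ)) ∈
        AddSubgroup.closure (Set.range (aidElt (Δ := Δ))) := by
    intro v
    induction v using Finsupp.induction with
    | zero => intro hv; convert AddSubgroup.zero_mem _ using 1; exact Subtype.ext (by simp)
    | single_add a b f ha hb ih =>
      intro hv
      have hmem : f - augmentation Δ f • Finsupp.single 1 1 ∈ augIdeal Δ := by
        simp [augIdeal, AddMonoidHom.mem_ker, map_sub, map_zsmul, augmentation_single]
      have heq : (⟨_, hv⟩ : ↥(augIdeal Δ)) =
          b • aidElt a + ⟨f - augmentation Δ f • Finsupp.single 1 1, hmem⟩ := by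
        apply Subtype.ext
        push_cast [aidElt]
        simp only [map_add, augmentation_single, smul_sub, add_smul, Finsupp.smul_single,
          smul_eq_mul, mul_one]
        abel
      rw [heq]
      exact AddSubgroup.add_mem _
        (AddSubgroup.zsmul_mem _ (AddSubgroup.subset_closure (Set.mem_range_self a)) b) (ih hmem)
  have h0 : augmentation Δ (u : Δ →₀ ℤ) = 0 := u.2
  have hv : (u : Δ →₀ ℤ) - augmentation Δ (u : Δ →₀ ℤ) • Finsupp.single 1 1 ∈ augIdeal Δ := by
    rw [h0]; simpa using u.2
  have hu : u = ⟨(u : Δ →₀ ℤ) - augmentation Δ (u : Δ →₀ ℤ) • Finsupp.single 1 1, hv⟩ :=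
    Subtype.ext (by simp [h0])
  rw [hu]; exact key _ hv

end Aux

section Aux2
variable {Γ₁ Δ : Type} [Group Γ₁] [Group Δ]
variable (π : Γ₁ →* Δ) (σ : Δ → Γ₁) (hσ : ∀ c, π (σ c) = c)

lemma of_surj : Function.Surjective (Abelianization.of : ↥π.ker → Abelianization ↥π.ker) :=
  fun a => Quotient.inductionOn' a fun k => ⟨k, rfl⟩

/-- Canonical lift `g ↦ (class of g·σ(πg)⁻¹, πg − 1) ∈ 𝓔`. -/
noncomputable def eElt (g : Γ₁) : EMod π :=
  (Additive.ofMul (Abelianization.of ⟨g * (σ (π g))⁻¹, by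
      simp [MonoidHom.mem_ker, map_mul, hσ]⟩), aidElt (π g))

lemma conjAb_of (d : Δ) (k : ↥π.ker) :
    conjAb π σ d (Abelianization.of k) = Abelianization.of (MulAut.conjNormal (σ d) k) :=
  Abelianization.map_of _ _

lemma eElt_mul [DistribMulAction Δ (EMod π)] (hE : EActionFormula π σ hσ)
    (g h : Γ₁) : eElt π σ hσ (g * h) = eElt π σ hσ g + (π g) • eElt π σ hσ h := by
  rw [show eElt π σ hσ h = (Additive.ofMul (Abelianization.of ⟨h * (σ (π h))⁻¹, _⟩), aidElt (π h))
    from rfl, hE (π g) _ (π h)]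
  unfold eElt
  rw [Prod.mk_add_mk]
  refine Prod.ext ?_ ?_
  · show Additive.ofMul _ = Additive.ofMul _ + Additive.ofMul _
    rw [← ofMul_mul]
    simp only [conjAb_of, kappaE, ← map_mul]
    apply congrArg
    apply congrArg
    apply Subtype.ext
    push_cast [MulAut.conjNormal_apply, map_mul]
    group
  · show aidElt (π (g * h)) = aidElt (π g) + aidElt2 (π g * π h) (π g)
    apply Subtype.ext
    push_cast [aidElt, aidElt2, map_mul]
    abel

lemma eElt_ker (hσ1 : σ 1 = 1) (k : ↥π.ker) :
    eElt π σ hσ (k : Γ₁) = (Additive.ofMul (Abelianization.of k), 0) := by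
  have hk : π (k : Γ₁) = 1 := k.2
  simp only [eElt, hk, hσ1, inv_one, mul_one, aidElt_one, Subtype.coe_eta]

lemma eElt_sigma (c : Δ) :
    eElt π σ hσ (σ c) = (0, aidElt c) := by
  simp only [eElt, hσ, mul_inv_cancel]
  norm_num
  rfl

end Aux2

section Aux3
variable {Γ₁ Δ : Type} [Group Γ₁] [Group Δ]
variable (π : Γ₁ →* Δ)
variable (M : Type) [AddCommGroup M] [DistribMulAction Δ M]

/-- Generating pure tensors of `𝓔 ⊗ M`. -/
def genT : Set (TMod M π) :=
  {x | ∃ (k : ↥π.ker) (c : Δ) (m : M),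
    x = ((Additive.ofMul (Abelianization.of k), aidElt c) : EMod π) ⊗ₜ[ℤ] m}

lemma tmod_mem (t : TMod M π) : t ∈ AddSubgroup.closure (genT π M) := by
  induction t using TensorProduct.induction_on with
  | zero => exact AddSubgroup.zero_mem _
  | tmul e m =>
    obtain ⟨a, u⟩ := e
    obtain ⟨k, hk⟩ := of_surj π (Additive.toMul a)
    have ha : a = Additive.ofMul (Abelianization.of k) := by rw [hk]; simp
    subst ha
    have hsplit : ((Additive.ofMul (Abelianization.of k), u) : EMod π) ⊗ₜ[ℤ] m
        = ((Additive.ofMul (Abelianization.of k), (0 : ↥(augIdeal Δ))) : EMod π) ⊗ₜ[ℤ] m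
          + (((0 : Additive (Abelianization ↥π.ker)), u) : EMod π) ⊗ₜ[ℤ] m := by
      rw [← TensorProduct.add_tmul, Prod.mk_add_mk, add_zero, zero_add]
    have h1 : ((Additive.ofMul (Abelianization.of k), (0 : ↥(augIdeal Δ))) : EMod π) ⊗ₜ[ℤ] m
        ∈ AddSubgroup.closure (genT π M) := by
      apply AddSubgroup.subset_closure
      exact ⟨k, 1, m, by rw [aidElt_one]⟩
    have h2 : ∀ u : ↥(augIdeal Δ),
        (((0 : Additive (Abelianization ↥π.ker)), u) : EMod π) ⊗ₜ[ℤ] m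
          ∈ AddSubgroup.closure (genT π M) := by
      intro u
      refine AddSubgroup.closure_induction ?_ ?_ ?_ ?_ (aid_gen u)
      · rintro x ⟨c, rfl⟩
        apply AddSubgroup.subset_closure
        exact ⟨1, c, m, by rw [map_one, ofMul_one]⟩
      · have : (((0 : Additive (Abelianization ↥π.ker)), (0:↥(augIdeal Δ))) : EMod π) = 0 := rfl
        rw [this, TensorProduct.zero_tmul]
        exact AddSubgroup.zero_mem _
      · intro x y _ _ hx hy
        have : (((0 : Additive (Abelianization ↥π.ker)), x + y) : EMod π)
            = ((0 : Additive (Abelianization ↥π.ker)), x) + ((0:Additive (Abelianization ↥π.ker)), y) := by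
          rw [Prod.mk_add_mk, add_zero]
        rw [this, TensorProduct.add_tmul]
        exact AddSubgroup.add_mem _ hx hy
      · intro x _ hx
        have : (((0 : Additive (Abelianization ↥π.ker)), -x) : EMod π)
            = -((0 : Additive (Abelianization ↥π.ker)), x) := by
          rw [Prod.neg_mk, neg_zero]
        rw [this, TensorProduct.neg_tmul]
        exact AddSubgroup.neg_mem _ hx
    rw [hsplit]
    exact AddSubgroup.add_mem _ h1 (h2 u)
  | add x y hx hy => exact AddSubgroup.add_mem _ hx hy

lemma tmod_hom_ext {X : Type} [AddCommGroup X] (F G : TMod M π →+ X)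
    (h : ∀ (k : ↥π.ker) (c : Δ) (m : M),
      F (((Additive.ofMul (Abelianization.of k), aidElt c) : EMod π) ⊗ₜ[ℤ] m)
        = G (((Additive.ofMul (Abelianization.of k), aidElt c) : EMod π) ⊗ₜ[ℤ] m)) :
    F = G := by
  ext t
  refine AddSubgroup.closure_induction ?_ ?_ ?_ ?_ (tmod_mem π M t)
  · rintro x ⟨k, c, m, rfl⟩; exact h k c m
  · simp
  · intro x y _ _ hx hy; simp [map_add, hx, hy]
  · intro x _ hx; simp [map_neg, hx]

end Aux3

section Aux4
variable {Γ₁ Δ : Type} [Group Γ₁] [Group Δ]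
variable (π : Γ₁ →* Δ) (σ : Δ → Γ₁) (hσ : ∀ c, π (σ c) = c)
variable (M : Type) [AddCommGroup M] [DistribMulAction Δ M]
variable [DistribMulAction Δ (EMod π)]

/-- Projection `𝓔⊗M → (𝓔⊗M)_Δ`. -/
noncomputable def mkT : TMod M π →+ CoinvT M π :=
  QuotientAddGroup.mk' (coinvKerT M π)

lemma relT (d : Δ) (e : EMod π) (m : M) :
    mkT π M ((d • e) ⊗ₜ[ℤ] (d • m)) = mkT π M (e ⊗ₜ[ℤ] m) := by
  rw [mkT, QuotientAddGroup.mk'_eq_mk']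
  refine ⟨-(diagT M π d (e ⊗ₜ[ℤ] m) - e ⊗ₜ[ℤ] m), ?_, ?_⟩
  · exact AddSubgroup.neg_mem _ (AddSubgroup.subset_closure ⟨d, e ⊗ₜ[ℤ] m, rfl⟩)
  · rw [show diagT M π d (e ⊗ₜ[ℤ] m) = (d • e) ⊗ₜ[ℤ] (d • m) from TensorProduct.map_tmul _ _ _ _]
    abel

lemma relT' (d : Δ) (e : EMod π) (m : M) :
    mkT π M ((d • e) ⊗ₜ[ℤ] m) = mkT π M (e ⊗ₜ[ℤ] (d⁻¹ • m)) := by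
  have := relT π M d e (d⁻¹ • m)
  rwa [smul_inv_smul] at this

/-- The chain map `(Γ₁ →₀ M) → 𝓔 ⊗ M`, `[g]⊗m ↦ e(g⁻¹) ⊗ m`. -/
noncomputable def fMap : (Γ₁ →₀ M) →+ TMod M π :=
  Finsupp.liftAddHom fun g =>
    ((TensorProduct.mk ℤ (EMod π) M) (eElt π σ hσ g⁻¹)).toAddMonoidHom

/-- The induced map `(Γ₁ →₀ M) → (𝓔 ⊗ M)_Δ`. -/
noncomputable def fbar : (Γ₁ →₀ M) →+ CoinvT M π :=
  (mkT π M).comp (fMap π σ hσ M)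

lemma fbar_single (g : Γ₁) (m : M) :
    fbar π σ hσ M (Finsupp.single g m) = mkT π M (eElt π σ hσ g⁻¹ ⊗ₜ[ℤ] m) := by
  simp [fbar, fMap, Finsupp.liftAddHom_apply_single]

lemma fbar_dTwo (hE : EActionFormula π σ hσ) :
    (fbar π σ hσ M).comp (dTwo M π) = 0 := by
  refine Finsupp.addHom_ext fun p m => ?_
  obtain ⟨g, h⟩ := p
  have hd2 : dTwo M π (Finsupp.single (g, h) m)
      = Finsupp.single h m - Finsupp.single (g * h) m + Finsupp.single g (π h • m) := by
    simp [dTwo, Finsupp.liftAddHom_apply_single]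
  rw [AddMonoidHom.comp_apply, hd2, map_add, map_sub]
  have hmul : eElt π σ hσ (g * h)⁻¹
      = eElt π σ hσ h⁻¹ + (π h)⁻¹ • eElt π σ hσ g⁻¹ := by
    rw [mul_inv_rev, eElt_mul π σ hσ hE, map_inv]
  rw [fbar_single, fbar_single, fbar_single, hmul, TensorProduct.add_tmul, map_add,
    relT' π M _ (eElt π σ hσ g⁻¹) m, inv_inv]
  abel

end Aux4

section Aux5
variable {Γ₁ Δ : Type} [Group Γ₁] [Group Δ]
variable (π : Γ₁ →* Δ) (σ : Δ → Γ₁)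
variable (M : Type) [AddCommGroup M] [DistribMulAction Δ M]

/-- The quotient `(Γ₁ →₀ M) / im d₂`. -/
abbrev QMod : Type := (Γ₁ →₀ M) ⧸ (dTwo M π).range

/-- Projection onto `QMod`. -/
noncomputable def pQ : (Γ₁ →₀ M) →+ QMod π M :=
  QuotientAddGroup.mk' (dTwo M π).range

lemma relQ (g h : Γ₁) (m : M) :
    pQ π M (Finsupp.single (g * h) m)
      = pQ π M (Finsupp.single h m) + pQ π M (Finsupp.single g (π h • m)) := by
  have hmem : Finsupp.single h m - Finsupp.single (g * h) m
      + Finsupp.single g (π h • m) ∈ (dTwo M π).range := by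
    exact ⟨Finsupp.single (g, h) m, by simp [dTwo, Finsupp.liftAddHom_apply_single]⟩
  have h0 : pQ π M (Finsupp.single h m) - pQ π M (Finsupp.single (g * h) m)
      + pQ π M (Finsupp.single g (π h • m)) = 0 := by
    rw [← map_sub, ← map_add]
    exact (QuotientAddGroup.eq_zero_iff _).mpr hmem
  have : pQ π M (Finsupp.single (g*h) m)
      - (pQ π M (Finsupp.single h m) + pQ π M (Finsupp.single g (π h • m)))
      = -(pQ π M (Finsupp.single h m) - pQ π M (Finsupp.single (g * h) m)
        + pQ π M (Finsupp.single g (π h • m))) := by abel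
  rw [← sub_eq_zero, this, h0, neg_zero]

lemma pQ_single_one (m : M) : pQ π M (Finsupp.single (1:Γ₁) m) = 0 := by
  have := relQ π M 1 1 m
  simp only [one_mul, map_one, one_smul] at this
  exact (left_eq_add.mp this)

lemma pQ_single_inv (g : Γ₁) (m : M) :
    pQ π M (Finsupp.single g⁻¹ m) = - pQ π M (Finsupp.single g ((π g)⁻¹ • m)) := by
  have := relQ π M g g⁻¹ m
  rw [mul_inv_cancel, pQ_single_one, map_inv] at this
  exact eq_neg_of_add_eq_zero_left this.symm

lemma pQ_inv_smul (g : Γ₁) (m : M) :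
    pQ π M (Finsupp.single g⁻¹ ((π g) • m)) = - pQ π M (Finsupp.single g m) := by
  rw [pQ_single_inv, inv_smul_smul]

/-- `Γ₂ →* Multiplicative (M →+ QMod)`, `k ↦ (m ↦ [single k⁻¹ m])`. -/
noncomputable def phiA0 : ↥π.ker →* Multiplicative (M →+ QMod π M) where
  toFun k := Multiplicative.ofAdd ((pQ π M).comp (Finsupp.singleAddHom ((k : Γ₁)⁻¹)))
  map_one' := by
    apply congrArg
    ext m
    simp [pQ_single_one]
  map_mul' k l := by
    rw [← ofAdd_add]
    apply congrArg
    ext m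
    have : ((k * l : ↥π.ker) : Γ₁)⁻¹ = (l : Γ₁)⁻¹ * (k : Γ₁)⁻¹ := by
      push_cast; rw [mul_inv_rev]
    simp only [AddMonoidHom.comp_apply, Finsupp.singleAddHom_apply, AddMonoidHom.add_apply]
    rw [this, relQ]
    have hk : π ((k : Γ₁)⁻¹) = 1 := by
      rw [map_inv, show π (k:Γ₁) = 1 from k.2, inv_one]
    rw [hk, one_smul]

/-- `Γ₂^{ab} →+ (M →+ QMod)`. -/
noncomputable def phiA : Additive (Abelianization ↥π.ker) →+ (M →+ QMod π M) :=
  MonoidHom.toAdditiveLeft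
    (Abelianization.lift (G := ↥π.ker) (A := Multiplicative (M →+ QMod π M)) (phiA0 π M) :
      Abelianization ↥π.ker →* Multiplicative (M →+ QMod π M))

lemma phiA_of (k : ↥π.ker) (m : M) :
    phiA π M (Additive.ofMul (Abelianization.of k)) m
      = pQ π M (Finsupp.single ((k : Γ₁)⁻¹) m) := by
  simp [phiA, phiA0]

/-- `I_Δ →+ (M →+ QMod)`, `(c−1) ↦ (m ↦ [single σ(c)⁻¹ m])`. -/
noncomputable def phiB : ↥(augIdeal Δ) →+ (M →+ QMod π M) :=
  (Finsupp.liftAddHom fun c => (zmultiplesHom (M →+ QMod π M))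
    ((pQ π M).comp (Finsupp.singleAddHom ((σ c)⁻¹)))).comp (augIdeal Δ).subtype

lemma phiB_aid (c : Δ) (hσ1 : σ 1 = 1) (m : M) :
    phiB π σ M (aidElt c) m = pQ π M (Finsupp.single ((σ c)⁻¹) m) := by
  simp only [phiB, AddMonoidHom.comp_apply, AddSubgroup.coe_subtype, aidElt, map_sub,
    Finsupp.liftAddHom_apply_single, one_zsmul, zmultiplesHom_apply, AddMonoidHom.sub_apply,
    Finsupp.singleAddHom_apply]
  rw [hσ1, inv_one, pQ_single_one, sub_zero]

lemma phiB_aid2 (a b : Δ) (m : M) :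
    phiB π σ M (aidElt2 a b) m = pQ π M (Finsupp.single ((σ a)⁻¹) m)
      - pQ π M (Finsupp.single ((σ b)⁻¹) m) := by
  simp only [phiB, AddMonoidHom.comp_apply, AddSubgroup.coe_subtype, aidElt2, map_sub,
    Finsupp.liftAddHom_apply_single, one_zsmul, zmultiplesHom_apply, AddMonoidHom.sub_apply,
    Finsupp.singleAddHom_apply]

/-- The bilinear pairing `𝓔 →+ (M →+ QMod)`. -/
noncomputable def phiE : EMod π →+ (M →+ QMod π M) :=
  (phiA π M).comp (AddMonoidHom.fst _ _) + (phiB π σ M).comp (AddMonoidHom.snd _ _)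

/-- `ψ : 𝓔 ⊗ M →+ QMod`. -/
noncomputable def psi : TMod M π →+ QMod π M :=
  TensorProduct.liftAddHom (phiE π σ M) (by
    intro r e m
    rw [map_zsmul]; simp [map_zsmul])

lemma psi_tmul (e : EMod π) (m : M) :
    psi π σ M (e ⊗ₜ[ℤ] m) = phiA π M e.1 m + phiB π σ M e.2 m := by
  rw [psi, TensorProduct.liftAddHom_tmul]
  rfl

lemma psi_gen (hσ1 : σ 1 = 1) (k : ↥π.ker) (c : Δ) (m : M) :
    psi π σ M (((Additive.ofMul (Abelianization.of k), aidElt c) : EMod π) ⊗ₜ[ℤ] m)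
      = pQ π M (Finsupp.single ((k : Γ₁)⁻¹) m)
        + pQ π M (Finsupp.single ((σ c)⁻¹) m) := by
  rw [psi_tmul, phiA_of, phiB_aid π σ M c hσ1]

end Aux5

section Aux6
variable {Γ₁ Δ : Type} [Group Γ₁] [Group Δ]
variable (π : Γ₁ →* Δ) (σ : Δ → Γ₁) (hσ : ∀ c, π (σ c) = c)
variable (M : Type) [AddCommGroup M] [DistribMulAction Δ M]

include hσ

lemma pQ_sigma_inv (d : Δ) (m : M) :
    pQ π M (Finsupp.single ((σ d)⁻¹) (d • m)) = - pQ π M (Finsupp.single (σ d) m) := by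
  rw [pQ_single_inv, hσ, inv_smul_smul]

lemma kmain (d : Δ) (k : ↥π.ker) (m : M) :
    pQ π M (Finsupp.single ((σ d * (k : Γ₁) * (σ d)⁻¹)⁻¹) (d • m))
      = pQ π M (Finsupp.single ((k : Γ₁)⁻¹) m) := by
  have h1 : (σ d * (k : Γ₁) * (σ d)⁻¹)⁻¹ = σ d * (k : Γ₁)⁻¹ * (σ d)⁻¹ := by group
  rw [h1, relQ π M (σ d * (k : Γ₁)⁻¹) ((σ d)⁻¹) (d • m), map_inv, hσ, inv_smul_smul,
    relQ π M (σ d) ((k : Γ₁)⁻¹) m]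
  have hk : π ((k : Γ₁)⁻¹) = 1 := by
    rw [map_inv, show π (k : Γ₁) = 1 from k.2, inv_one]
  rw [hk, one_smul, pQ_sigma_inv π σ hσ]
  abel

lemma wmain (d c : Δ) (m : M) :
    pQ π M (Finsupp.single ((σ d * σ c * (σ (d * c))⁻¹)⁻¹) (d • m))
      + (pQ π M (Finsupp.single ((σ (d * c))⁻¹) (d • m))
        - pQ π M (Finsupp.single ((σ d)⁻¹) (d • m)))
      = pQ π M (Finsupp.single ((σ c)⁻¹) m) := by
  have h1 : (σ d * σ c * (σ (d * c))⁻¹)⁻¹ = σ (d * c) * (σ c)⁻¹ * (σ d)⁻¹ := by group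
  have h2 : (d * c)⁻¹ • (d • m) = c⁻¹ • m := by
    rw [mul_inv_rev, mul_smul, inv_smul_smul]
  rw [h1, relQ π M (σ (d * c) * (σ c)⁻¹) ((σ d)⁻¹) (d • m), map_inv, hσ, inv_smul_smul,
    relQ π M (σ (d * c)) ((σ c)⁻¹) m, map_inv, hσ,
    pQ_single_inv π M (σ (d * c)) (d • m), hσ, h2]
  abel

lemma psi_diag [DistribMulAction Δ (EMod π)] (hE : EActionFormula π σ hσ) (hσ1 : σ 1 = 1)
    (d : Δ) :
    (psi π σ M).comp (diagT M π d).toAddMonoidHom = psi π σ M := by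
  apply tmod_hom_ext
  intro k c m
  have hdiag : diagT M π d (((Additive.ofMul (Abelianization.of k), aidElt c) : EMod π) ⊗ₜ[ℤ] m)
      = (d • ((Additive.ofMul (Abelianization.of k), aidElt c) : EMod π)) ⊗ₜ[ℤ] (d • m) := by
    exact TensorProduct.map_tmul _ _ _ _
  rw [AddMonoidHom.comp_apply, LinearMap.toAddMonoidHom_coe, hdiag,
    hE d (Abelianization.of k) c, psi_gen π σ M hσ1, psi_tmul]
  show phiA π M (Additive.ofMul (conjAb π σ d (Abelianization.of k) * kappaE π σ hσ d c)) (d • m)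
      + phiB π σ M (aidElt2 (d * c) d) (d • m) = _
  rw [ofMul_mul, map_add, AddMonoidHom.add_apply, conjAb_of, phiA_of, phiB_aid2,
    show kappaE π σ hσ d c = Abelianization.of ⟨σ d * σ c * (σ (d * c))⁻¹, by
      have : π (σ d * σ c * (σ (d * c))⁻¹) = 1 := by
          rw [map_mul, map_mul, map_inv, hσ, hσ, hσ, mul_inv_cancel]
      simpa [MonoidHom.mem_ker] using this⟩ from rfl, phiA_of]
  have hconj : ((MulAut.conjNormal (σ d) k : ↥π.ker) : Γ₁) = σ d * (k : Γ₁) * (σ d)⁻¹ :=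
    MulAut.conjNormal_apply _ _
  rw [hconj, kmain π σ hσ M d k m]
  have := wmain π σ hσ M d c m
  push_cast
  rw [← this]
  abel

end Aux6

section Aux7
variable {Γ₁ Δ : Type} [Group Γ₁] [Group Δ]
variable (π : Γ₁ →* Δ) (σ : Δ → Γ₁) (hσ : ∀ c, π (σ c) = c)
variable (M : Type) [AddCommGroup M] [DistribMulAction Δ M]
variable [DistribMulAction Δ (EMod π)]

/-- `ψ̄ : (𝓔⊗M)_Δ →+ QMod`, induced by `ψ`. -/
noncomputable def psibar (hE : EActionFormula π σ hσ) (hσ1 : σ 1 = 1) :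
    CoinvT M π →+ QMod π M :=
  QuotientAddGroup.lift (coinvKerT M π) (psi π σ M) (by
    intro x hx
    rw [AddMonoidHom.mem_ker]
    refine AddSubgroup.closure_induction ?_ ?_ ?_ ?_ hx
    · rintro y ⟨d, t, rfl⟩
      rw [map_sub]
      have h1 : psi π σ M (diagT M π d t) = psi π σ M t := by
        have := DFunLike.congr_fun (psi_diag π σ hσ M hE hσ1 d) t
        simpa using this
      rw [h1, sub_self]
    · simp
    · intro a b _ _ ha hb; rw [map_add, ha, hb, add_zero]
    · intro a _ ha; rw [map_neg, ha, neg_zero])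

lemma psibar_mk (hE : EActionFormula π σ hσ) (hσ1 : σ 1 = 1) (t : TMod M π) :
    psibar π σ hσ M hE hσ1 (mkT π M t) = psi π σ M t := rfl

lemma psibar_fbar (hE : EActionFormula π σ hσ) (hσ1 : σ 1 = 1) :
    (psibar π σ hσ M hE hσ1).comp (fbar π σ hσ M) = pQ π M := by
  refine Finsupp.addHom_ext fun g m => ?_
  rw [AddMonoidHom.comp_apply, fbar_single, psibar_mk, psi_tmul]
  show phiA π M (Additive.ofMul (Abelianization.of ⟨g⁻¹ * (σ (π g⁻¹))⁻¹, _⟩)) m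
      + phiB π σ M (aidElt (π g⁻¹)) m = _
  rw [phiA_of, phiB_aid π σ M _ hσ1]
  have h1 : ((⟨g⁻¹ * (σ (π g⁻¹))⁻¹, by simp [MonoidHom.mem_ker, map_mul, hσ]⟩ : ↥π.ker) : Γ₁)⁻¹
      = σ (π g⁻¹) * g := by
    show (g⁻¹ * (σ (π g⁻¹))⁻¹)⁻¹ = σ (π g⁻¹) * g
    group
  rw [h1, relQ π M (σ (π g⁻¹)) g m,
    pQ_single_inv π M (σ (π g⁻¹)) m, hσ, map_inv, inv_inv]
  abel

/-- `F : QMod →+ (𝓔⊗M)_Δ` induced by `f`. -/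
noncomputable def FQ (hE : EActionFormula π σ hσ) : QMod π M →+ CoinvT M π :=
  QuotientAddGroup.lift (dTwo M π).range (fbar π σ hσ M) (by
    rintro x ⟨y, rfl⟩
    rw [AddMonoidHom.mem_ker]
    have := DFunLike.congr_fun (fbar_dTwo π σ hσ M hE) y
    simpa using this)

lemma FQ_pQ (hE : EActionFormula π σ hσ) (x : Γ₁ →₀ M) :
    FQ π σ hσ M hE (pQ π M x) = fbar π σ hσ M x := rfl

lemma FQ_psi (hE : EActionFormula π σ hσ) (hσ1 : σ 1 = 1) :
    (FQ π σ hσ M hE).comp (psi π σ M) = mkT π M := by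
  apply tmod_hom_ext
  intro k c m
  rw [AddMonoidHom.comp_apply, psi_gen π σ M hσ1, map_add, FQ_pQ, FQ_pQ,
    fbar_single, fbar_single, inv_inv, inv_inv, eElt_ker π σ hσ hσ1, eElt_sigma π σ hσ,
    ← map_add, ← TensorProduct.add_tmul, Prod.mk_add_mk, add_zero, zero_add]

end Aux7

section Statement9

variable {Γ₁ Δ : Type} [Group Γ₁] [Group Δ]

theorem statement9
    (π : Γ₁ →* Δ) (hπ : Function.Surjective π)
    (σ : Δ → Γ₁) (hσ : ∀ c, π (σ c) = c) (hσ1 : σ 1 = 1)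
    [Fintype Δ]
    [DistribMulAction Δ (EMod π)] (hE : EActionFormula π σ hσ)
    (M : Type) [AddCommGroup M] [DistribMulAction Δ M]
    (q : CoinvT M π →+ M)
    (hq : ∀ (g : Abelianization ↥π.ker) (c : Δ) (m : M),
      q (QuotientAddGroup.mk (((Additive.ofMul g, aidElt c) : EMod π) ⊗ₜ[ℤ] m)) =
        c⁻¹ • m - m) :
    -- q is surjective onto I_ΔM ...
    q.range = idealSMulM (Δ := Δ) M
    -- ... and there is an injective map H_1(Γ₁,M) → (𝓔⊗M)_Δ with image ker q:
    ∧ ∃ ι : HOne M π →+ CoinvT M π,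
        Function.Injective ι ∧ ι.range = q.ker := by
  -- `q ∘ f = d₁`
  have hqmk : ∀ (g : Abelianization ↥π.ker) (c : Δ) (m : M),
      q (mkT π M (((Additive.ofMul g, aidElt c) : EMod π) ⊗ₜ[ℤ] m)) = c⁻¹ • m - m :=
    fun g c m => hq g c m
  have hqf : q.comp (fbar π σ hσ M) = dOne M π := by
    refine Finsupp.addHom_ext fun g m => ?_
    rw [AddMonoidHom.comp_apply, fbar_single]
    have h1 : q (mkT π M (eElt π σ hσ g⁻¹ ⊗ₜ[ℤ] m)) = (π g⁻¹)⁻¹ • m - m :=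
      hqmk _ (π g⁻¹) m
    rw [h1, map_inv, inv_inv]
    simp [dOne, Finsupp.liftAddHom_apply_single]
  constructor
  · -- range q = I_Δ M
    apply le_antisymm
    · rintro y ⟨s, rfl⟩
      obtain ⟨t, rfl⟩ := QuotientAddGroup.mk'_surjective (coinvKerT M π) s
      show q (mkT π M t) ∈ idealSMulM (Δ := Δ) M
      refine AddSubgroup.closure_induction ?_ ?_ ?_ ?_ (tmod_mem π M t)
      · rintro x ⟨k, c, m, rfl⟩
        rw [hqmk (Abelianization.of k) c m]
        exact AddSubgroup.subset_closure ⟨c⁻¹, m, rfl⟩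
      · rw [map_zero, map_zero]; exact AddSubgroup.zero_mem _
      · intro a b _ _ ha hb
        rw [map_add, map_add]; exact AddSubgroup.add_mem _ ha hb
      · intro a _ ha
        rw [map_neg, map_neg]; exact AddSubgroup.neg_mem _ ha
    · rw [idealSMulM]
      apply (AddSubgroup.closure_le _).mpr
      rintro x ⟨c, m, rfl⟩
      refine ⟨mkT π M (((Additive.ofMul (Abelianization.of (1 : ↥π.ker)), aidElt c⁻¹) :
        EMod π) ⊗ₜ[ℤ] m), ?_⟩
      rw [hqmk (Abelianization.of 1) c⁻¹ m, inv_inv]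
  · -- the injection ι with range ker q
    refine ⟨QuotientAddGroup.lift ((dTwo M π).range.addSubgroupOf (dOne M π).ker)
      ((fbar π σ hσ M).comp (dOne M π).ker.subtype) ?_, ?_, ?_⟩
    · intro x hx
      rw [AddMonoidHom.mem_ker]
      obtain ⟨y, hy⟩ := AddSubgroup.mem_addSubgroupOf.mp hx
      rw [AddMonoidHom.comp_apply, AddSubgroup.coe_subtype, ← hy]
      have := DFunLike.congr_fun (fbar_dTwo π σ hσ M hE) y
      simpa using this
    · rw [injective_iff_map_eq_zero]
      intro a
      refine QuotientAddGroup.induction_on a ?_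
      intro x h0
      rw [QuotientAddGroup.lift_mk, AddMonoidHom.comp_apply, AddSubgroup.coe_subtype] at h0
      have hp : pQ π M (x : Γ₁ →₀ M) = 0 := by
        have h2 := DFunLike.congr_fun (psibar_fbar π σ hσ M hE hσ1) (x : Γ₁ →₀ M)
        rw [AddMonoidHom.comp_apply, h0, map_zero] at h2
        exact h2.symm
      have hx2 : (x : Γ₁ →₀ M) ∈ (dTwo M π).range :=
        (QuotientAddGroup.eq_zero_iff _).mp hp
      exact (QuotientAddGroup.eq_zero_iff x).mpr (AddSubgroup.mem_addSubgroupOf.mpr hx2)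
    · ext s
      constructor
      · rintro ⟨a, rfl⟩
        refine QuotientAddGroup.induction_on a ?_
        intro x
        rw [AddMonoidHom.mem_ker, QuotientAddGroup.lift_mk, AddMonoidHom.comp_apply,
          AddSubgroup.coe_subtype]
        have := DFunLike.congr_fun hqf (x : Γ₁ →₀ M)
        rw [AddMonoidHom.comp_apply] at this
        rw [this]
        exact AddMonoidHom.mem_ker.mp x.2
      · intro hs
        obtain ⟨t, ht⟩ := QuotientAddGroup.mk'_surjective (coinvKerT M π) s
        obtain ⟨x, hx⟩ := QuotientAddGroup.mk'_surjective (dTwo M π).range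
          (psibar π σ hσ M hE hσ1 s)
        have hfx : fbar π σ hσ M x = s := by
          have h3 : FQ π σ hσ M hE (pQ π M x) = FQ π σ hσ M hE (psibar π σ hσ M hE hσ1 s) :=
            congrArg _ hx
        -- rewrite RHS
          rw [FQ_pQ] at h3
          rw [h3, ← ht]
          show FQ π σ hσ M hE (psibar π σ hσ M hE hσ1 (mkT π M t)) = mkT π M t
          rw [psibar_mk]
          have h4 := DFunLike.congr_fun (FQ_psi π σ hσ M hE hσ1) t
          rw [AddMonoidHom.comp_apply] at h4
          rw [h4]
        have hdx : (x : Γ₁ →₀ M) ∈ (dOne M π).ker := by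
          rw [AddMonoidHom.mem_ker]
          have := DFunLike.congr_fun hqf x
          rw [AddMonoidHom.comp_apply] at this
          rw [← this, hfx]
          exact AddMonoidHom.mem_ker.mp hs
        refine ⟨QuotientAddGroup.mk (⟨x, hdx⟩ : ↥(dOne M π).ker), ?_⟩
        rw [QuotientAddGroup.lift_mk, AddMonoidHom.comp_apply, AddSubgroup.coe_subtype]
        exact hfx

end Statement9
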